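/- Let K be a closed bounded matrix convex set over ℝ^g (self-adjoint tuples) containing 0, and let θ = (θ_n) be a self-adjoint matrix affine map with θ_n : K(n) → B(H_n). Then there exist real numbers α_0, α_1, ..., α_g such that θ_n(Y) = α_0 I_n − Σ_{i=1}^g α_i Y_i for all Y ∈ K(n) and all n. -/

import Mathlib

set_option maxHeartbeats 1000000
set_option synthInstance.maxHeartbeats 400000

namespace PencilAux

variable {M : Type*} [AddCommGroup M] [Module ℝ M]

/-- extension of an affine, positively-homogeneous function on a convex set containing 0
to a global linear functional -/
lemma extend_affine (S : Set M) (ψ : M → ℝ)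
    (h0S : (0 : M) ∈ S) (hψ0 : ψ 0 = 0)
    (hA : ∀ y ∈ S, ∀ z ∈ S, ∀ t : ℝ, 0 ≤ t → t ≤ 1 →
      (t • y + (1 - t) • z ∈ S ∧ ψ (t • y + (1 - t) • z) = t * ψ y + (1 - t) * ψ z)) :
    ∃ F : M →ₗ[ℝ] ℝ, ∀ y ∈ S, F y = ψ y := by
  -- scaling
  have hscale : ∀ y ∈ S, ∀ t : ℝ, 0 ≤ t → t ≤ 1 → t • y ∈ S ∧ ψ (t • y) = t * ψ y := by
    intro y hy t ht0 ht1
    have := hA y hy 0 h0S t ht0 ht1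
    simpa [hψ0] using this
  -- cone addition
  have coneAdd : ∀ t : ℝ, 0 ≤ t → ∀ y ∈ S, ∀ s : ℝ, 0 ≤ s → ∀ z ∈ S,
      ∃ r : ℝ, 0 ≤ r ∧ ∃ w ∈ S, t • y + s • z = r • w ∧ r * ψ w = t * ψ y + s * ψ z := by
    intro t ht y hy s hs z hz
    rcases eq_or_lt_of_le (add_nonneg ht hs) with h | h
    · have ht' : t = 0 := by linarith
      have hs' : s = 0 := by linarith
      exact ⟨0, le_refl _, 0, h0S, by simp [ht', hs'], by simp [ht', hs', hψ0]⟩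
    · have h1 : (0:ℝ) ≤ t / (t+s) := div_nonneg ht h.le
      have h2 : t / (t+s) ≤ 1 := by rw [div_le_one h]; linarith
      have h3 : 1 - t / (t+s) = s / (t+s) := by field_simp; ring
      obtain ⟨hw, hval⟩ := hA y hy z hz (t / (t+s)) h1 h2
      refine ⟨t + s, h.le, _, hw, ?_, ?_⟩
      · rw [smul_add, smul_smul, smul_smul, h3]
        have e1 : (t+s) * (t/(t+s)) = t := by field_simp
        have e2 : (t+s) * (s/(t+s)) = s := by field_simp
        rw [e1, e2]
      · rw [hval, h3]
        field_simp
  -- well-definedness on the cone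
  have wdhalf : ∀ t : ℝ, 0 ≤ t → ∀ y ∈ S, ∀ s : ℝ, 0 ≤ s → ∀ z ∈ S,
      s ≤ t → t • y = s • z → t * ψ y = s * ψ z := by
    intro t ht y hy s hs z hz hst heq
    rcases eq_or_lt_of_le ht with h | h
    · have hs' : s = 0 := by linarith
      simp [← h, hs']
    · have h1 : (0:ℝ) ≤ s / t := div_nonneg hs h.le
      have h2 : s / t ≤ 1 := by rw [div_le_one h]; exact hst
      obtain ⟨_, hval⟩ := hscale z hz (s / t) h1 h2
      have hy' : y = (s / t) • z := by
        have : t • y = t • ((s/t) • z) := by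
          rw [heq, smul_smul]; congr 1; field_simp
        exact smul_right_injective M h.ne' this
      rw [hy', hval]
      field_simp
  have wd : ∀ t : ℝ, 0 ≤ t → ∀ y ∈ S, ∀ s : ℝ, 0 ≤ s → ∀ z ∈ S,
      t • y = s • z → t * ψ y = s * ψ z := by
    intro t ht y hy s hs z hz heq
    rcases le_total s t with h | h
    · exact wdhalf t ht y hy s hs z hz h heq
    · exact (wdhalf s hs z hz t ht y hy h heq.symm).symm
  -- the subspace C - C
  classical
  set P : M → Prop := fun x => ∃ t : ℝ, 0 ≤ t ∧ ∃ s : ℝ, 0 ≤ s ∧ ∃ y ∈ S, ∃ z ∈ S,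
      x = t • y - s • z with hP
  -- well-definedness on differences
  have wd2 : ∀ t : ℝ, 0 ≤ t → ∀ s : ℝ, 0 ≤ s → ∀ y ∈ S, ∀ z ∈ S,
      ∀ t' : ℝ, 0 ≤ t' → ∀ s' : ℝ, 0 ≤ s' → ∀ y' ∈ S, ∀ z' ∈ S,
      t • y - s • z = t' • y' - s' • z' →
      t * ψ y - s * ψ z = t' * ψ y' - s' * ψ z' := by
    intro t ht s hs y hy z hz t' ht' s' hs' y' hy' z' hz' heq
    have heq' : t • y + s' • z' = t' • y' + s • z := by
      rw [sub_eq_sub_iff_add_eq_add] at heq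
      linear_combination (norm := abel) heq
    obtain ⟨r, hr, w, hw, hrep, hval⟩ := coneAdd t ht y hy s' hs' z' hz'
    obtain ⟨r', hr', w', hw', hrep', hval'⟩ := coneAdd t' ht' y' hy' s hs z hz
    have : r * ψ w = r' * ψ w' := wd r hr w hw r' hr' w' hw' (by rw [← hrep, ← hrep', heq'])
    have h2 : t * ψ y + s' * ψ z' = t' * ψ y' + s * ψ z := by rw [← hval, ← hval', this]
    linarith
  -- the value function
  set f : M → ℝ := fun x =>
    if hx : P x then hx.choose * ψ hx.choose_spec.2.choose_spec.2.choose
      - hx.choose_spec.2.choose * ψ hx.choose_spec.2.choose_spec.2.choose_spec.2.choose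
    else 0 with hf
  have fspec : ∀ x, ∀ t : ℝ, 0 ≤ t → ∀ s : ℝ, 0 ≤ s → ∀ y ∈ S, ∀ z ∈ S,
      x = t • y - s • z → f x = t * ψ y - s * ψ z := by
    intro x t ht s hs y hy z hz hrep
    have hx : P x := ⟨t, ht, s, hs, y, hy, z, hz, hrep⟩
    rw [hf]
    simp only [dif_pos hx]
    have h1 := hx.choose_spec
    have h2 := h1.2.choose_spec
    have h3 := h2.2.choose_spec
    have h4 := h3.2.choose_spec
    exact wd2 _ h1.1 _ h2.1 _ h3.1 _ h4.1 t ht s hs y hy z hz (h4.2.symm.trans hrep)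
  -- the submodule generated by S
  set G : Submodule ℝ M :=
    { carrier := {x | P x}
      zero_mem' := ⟨0, le_refl _, 0, le_refl _, 0, h0S, 0, h0S, by simp⟩
      add_mem' := by
        rintro a b ⟨t, ht, s, hs, y, hy, z, hz, hrep⟩ ⟨t', ht', s', hs', y', hy', z', hz', hrep'⟩
        obtain ⟨r, hr, w, hw, hrw, -⟩ := coneAdd t ht y hy t' ht' y' hy'
        obtain ⟨r2, hr2, w2, hw2, hrw2, -⟩ := coneAdd s hs z hz s' hs' z' hz'
        exact ⟨r, hr, r2, hr2, w, hw, w2, hw2, by rw [hrep, hrep', ← hrw, ← hrw2]; abel⟩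
      smul_mem' := by
        rintro c a ⟨t, ht, s, hs, y, hy, z, hz, hrep⟩
        rcases le_total 0 c with hc | hc
        · exact ⟨c * t, mul_nonneg hc ht, c * s, mul_nonneg hc hs, y, hy, z, hz, by
            rw [hrep, smul_sub, smul_smul, smul_smul]⟩
        · refine ⟨(-c) * s, mul_nonneg (neg_nonneg.2 hc) hs, (-c) * t,
            mul_nonneg (neg_nonneg.2 hc) ht, z, hz, y, hy, ?_⟩
          rw [hrep, smul_sub, smul_smul, smul_smul, neg_mul, neg_mul, neg_smul, neg_smul]
          abel } with hG
  have memG : ∀ x, x ∈ G ↔ P x := fun x => Iff.rfl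
  -- the linear functional on G
  set L : G →ₗ[ℝ] ℝ :=
    { toFun := fun x => f x.1
      map_add' := by
        rintro ⟨a, ha⟩ ⟨b, hb⟩
        obtain ⟨t, ht, s, hs, y, hy, z, hz, hrep⟩ := ha
        obtain ⟨t', ht', s', hs', y', hy', z', hz', hrep'⟩ := hb
        obtain ⟨r, hr, w, hw, hrw, hvw⟩ := coneAdd t ht y hy t' ht' y' hy'
        obtain ⟨r2, hr2, w2, hw2, hrw2, hvw2⟩ := coneAdd s hs z hz s' hs' z' hz'
        have hab : a + b = r • w - r2 • w2 := by
          rw [hrep, hrep', ← hrw, ← hrw2]; abel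
        show f (a + b) = f a + f b
        rw [fspec _ r hr r2 hr2 w hw w2 hw2 hab, fspec _ t ht s hs y hy z hz hrep,
          fspec _ t' ht' s' hs' y' hy' z' hz' hrep']
        linarith
      map_smul' := by
        rintro c ⟨a, ha⟩
        obtain ⟨t, ht, s, hs, y, hy, z, hz, hrep⟩ := ha
        show f (c • a) = c • f a
        rcases le_total 0 c with hc | hc
        · rw [fspec _ (c*t) (mul_nonneg hc ht) (c*s) (mul_nonneg hc hs) y hy z hz
            (by rw [hrep, smul_sub, smul_smul, smul_smul]),
            fspec _ t ht s hs y hy z hz hrep, smul_eq_mul]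
          ring
        · rw [fspec _ ((-c)*s) (mul_nonneg (neg_nonneg.2 hc) hs) ((-c)*t)
            (mul_nonneg (neg_nonneg.2 hc) ht) z hz y hy
            (by rw [hrep, smul_sub, smul_smul, smul_smul, neg_mul, neg_mul, neg_smul, neg_smul]; abel),
            fspec _ t ht s hs y hy z hz hrep, smul_eq_mul]
          ring } with hL
  obtain ⟨F, hF⟩ := LinearMap.exists_extend L
  refine ⟨F, fun y hy => ?_⟩
  have hyG : y ∈ G := ⟨1, zero_le_one, 0, le_refl _, y, hy, 0, h0S, by simp⟩
  have : F y = L ⟨y, hyG⟩ := by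
    have := congrArg (fun (T : G →ₗ[ℝ] ℝ) => T ⟨y, hyG⟩) hF
    simpa using this
  rw [this]
  have : f y = 1 * ψ y - 0 * ψ 0 := fspec y 1 zero_le_one 0 (le_refl _) y hy 0 h0S (by simp)
  simp only [hL, LinearMap.coe_mk, AddHom.coe_mk]
  rw [this]
  ring

noncomputable section

local notation "⟪" x ", " y "⟫" => @inner ℂ _ _ x y

abbrev H (n : ℕ) := EuclideanSpace ℂ (Fin n)
abbrev Op (n : ℕ) := H n →L[ℂ] H n

def rk {n m : ℕ} (a : H n) (b : H m) : H n →L[ℂ] H m := (innerSL ℂ a).smulRight b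

@[simp] lemma rk_apply {n m : ℕ} (a : H n) (b : H m) (x : H n) : rk a b x = ⟪a, x⟫ • b := rfl

lemma adjoint_rk {n m : ℕ} (a : H n) (b : H m) :
    ContinuousLinearMap.adjoint (rk a b) = rk b a := by
  symm
  rw [ContinuousLinearMap.eq_adjoint_iff]
  intro x y
  simp only [rk_apply, inner_smul_left, inner_smul_right]
  rw [← inner_conj_symm x b]
  ring

lemma comp_rk {n m k : ℕ} (A : H m →L[ℂ] H k) (a : H n) (b : H m) :
    A.comp (rk a b) = rk a (A b) := by
  ext x; simp

lemma rk_comp_rk {n m k : ℕ} (a : H n) (b : H m) (c : H m) (d : H k) :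
    (rk c d).comp (rk a b) = ⟪c, b⟫ • rk a d := by
  ext x
  simp only [ContinuousLinearMap.comp_apply, rk_apply, ContinuousLinearMap.smul_apply,
    inner_smul_right, smul_smul]
  ring_nf

def e : H 1 := EuclideanSpace.single 0 1

@[simp] lemma inner_e_e : ⟪e, e⟫ = 1 := by
  simp [e, EuclideanSpace.inner_single_left, EuclideanSpace.single_apply]

@[simp] lemma inner_e_left (x : H 1) : ⟪e, x⟫ = x 0 := by
  simp [e, EuclideanSpace.inner_single_left]

@[simp] lemma e_apply (j : Fin 1) : e j = 1 := by
  have : j = 0 := Subsingleton.elim _ _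
  subst this
  simp [e, EuclideanSpace.single_apply]

lemma e_smul (x : H 1) : x 0 • e = x := by
  ext j
  have : j = 0 := Subsingleton.elim _ _
  subst this
  simp [e, EuclideanSpace.single_apply]

@[simp] lemma rk_e_e : rk e e = (1 : Op 1) := by
  ext x j
  have : j = 0 := Subsingleton.elim _ _
  subst this
  simp

/-- any operator on `H 1` is a scalar -/
lemma op1 (A : Op 1) : A = ⟪e, A e⟫ • 1 := by
  ext x j
  have hj : j = 0 := Subsingleton.elim _ _
  subst hj
  conv_lhs => rw [← e_smul x]
  simp [map_smul]
  ring

def bE {n : ℕ} (ℓ : Fin n) : H n := EuclideanSpace.single ℓ 1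

@[simp] lemma inner_bE_left {n : ℕ} (ℓ : Fin n) (x : H n) : ⟪bE ℓ, x⟫ = x ℓ := by
  simp [bE, EuclideanSpace.inner_single_left]

lemma sum_rk_bE {n : ℕ} : (∑ ℓ : Fin n, rk (bE ℓ) (bE ℓ)) = (1 : Op n) := by
  ext x j
  simp only [ContinuousLinearMap.sum_apply, rk_apply, inner_bE_left,
    ContinuousLinearMap.one_apply]
  rw [WithLp.ofLp_sum, Finset.sum_apply]
  simp [bE, EuclideanSpace.single_apply]



lemma sandv {n : ℕ} (v : H n) (hv : ‖v‖ = 1) (A : Op n) :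
    (ContinuousLinearMap.adjoint (rk e v)).comp (A.comp (rk e v)) = ⟪v, A v⟫ • (1 : Op 1) := by
  rw [adjoint_rk, comp_rk, rk_comp_rk, rk_e_e]

lemma sandv0 {n : ℕ} (v : H n) (hv : ‖v‖ = 1) :
    (ContinuousLinearMap.adjoint (rk e v)).comp (rk e v) = (1 : Op 1) := by
  rw [adjoint_rk, rk_comp_rk, inner_self_eq_norm_sq_to_K, hv, rk_e_e]
  norm_num

lemma sand1 (c : ℝ) (A : Op 1) :
    (ContinuousLinearMap.adjoint (rk e ((c:ℂ) • e))).comp (A.comp (rk e ((c:ℂ) • e))) =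
      (((c:ℂ)^2) * ⟪e, A e⟫) • (1 : Op 1) := by
  rw [adjoint_rk, comp_rk, rk_comp_rk, rk_e_e, map_smul, inner_smul_left, inner_smul_right,
    Complex.conj_ofReal]
  ring_nf

lemma sand10 (c : ℝ) :
    (ContinuousLinearMap.adjoint (rk e ((c:ℂ) • e))).comp (rk e ((c:ℂ) • e)) =
      ((c:ℂ)^2) • (1 : Op 1) := by
  rw [adjoint_rk, rk_comp_rk, inner_smul_left, inner_smul_right, Complex.conj_ofReal, rk_e_e,
    inner_e_e]
  ring_nf

lemma smul_one_inj {c d : ℂ} (h : c • (1 : Op 1) = d • (1 : Op 1)) : c = d := by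
  have := congrArg (fun A : Op 1 => (A e) 0) h
  simpa using this

lemma real_inner_self {n : ℕ} {T : Op n} (h : IsSelfAdjoint T) (v : H n) :
    ((⟪v, T v⟫).re : ℂ) = ⟪v, T v⟫ := by
  apply Complex.conj_eq_iff_re.mp
  have hT : ContinuousLinearMap.adjoint T = T := by
    rw [← ContinuousLinearMap.star_eq_adjoint]; exact h
  rw [inner_conj_symm]
  nth_rewrite 1 [← hT]
  rw [ContinuousLinearMap.adjoint_inner_left]

end

end PencilAux

open PencilAux

local notation "⟪" x ", " y "⟫" => @inner ℂ _ _ x y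

/-- Proposition 3.1: a self-adjoint matrix affine map `θ` on a closed
bounded matrix convex set `K` (of self-adjoint tuples) containing `0` is a (monic-type)
linear pencil: there are reals `α₀, α₁, …, α_g` with
`θ_n(Y) = α₀ I − Σ α_i Y_i` on all of `K`. -/
theorem matrix_affine_maps_are_pencils {g : ℕ}
    (K : ∀ n : ℕ, Set (Fin g → (EuclideanSpace ℂ (Fin n) →L[ℂ] EuclideanSpace ℂ (Fin n))))
    (hsa : ∀ n, ∀ Y ∈ K n, ∀ i, IsSelfAdjoint (Y i))
    (hclosed : ∀ n, IsClosed (K n))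
    (hbdd : ∃ C : ℝ, ∀ n, ∀ Y ∈ K n, ∀ i, ‖Y i‖ ≤ C)
    (h0 : ∀ n, (fun _ => (0 : EuclideanSpace ℂ (Fin n) →L[ℂ] EuclideanSpace ℂ (Fin n))) ∈ K n)
    (hconv : ∀ (n k : ℕ) (nn : Fin k → ℕ)
      (Z : ∀ ℓ : Fin k, Fin g →
        (EuclideanSpace ℂ (Fin (nn ℓ)) →L[ℂ] EuclideanSpace ℂ (Fin (nn ℓ))))
      (V : ∀ ℓ : Fin k, EuclideanSpace ℂ (Fin n) →L[ℂ] EuclideanSpace ℂ (Fin (nn ℓ))),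
      (∀ ℓ, Z ℓ ∈ K (nn ℓ)) →
      (∑ ℓ, (ContinuousLinearMap.adjoint (V ℓ)).comp (V ℓ)) = 1 →
      (fun i => ∑ ℓ, (ContinuousLinearMap.adjoint (V ℓ)).comp (((Z ℓ) i).comp (V ℓ))) ∈ K n)
    (θ : ∀ n : ℕ, (Fin g → (EuclideanSpace ℂ (Fin n) →L[ℂ] EuclideanSpace ℂ (Fin n))) →
      (EuclideanSpace ℂ (Fin n) →L[ℂ] EuclideanSpace ℂ (Fin n)))
    (hθsa : ∀ n, ∀ Y ∈ K n, IsSelfAdjoint (θ n Y))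
    (hθaff : ∀ (n k : ℕ) (nn : Fin k → ℕ)
      (Z : ∀ ℓ : Fin k, Fin g →
        (EuclideanSpace ℂ (Fin (nn ℓ)) →L[ℂ] EuclideanSpace ℂ (Fin (nn ℓ))))
      (V : ∀ ℓ : Fin k, EuclideanSpace ℂ (Fin n) →L[ℂ] EuclideanSpace ℂ (Fin (nn ℓ))),
      (∀ ℓ, Z ℓ ∈ K (nn ℓ)) →
      (∑ ℓ, (ContinuousLinearMap.adjoint (V ℓ)).comp (V ℓ)) = 1 →
      θ n (fun i => ∑ ℓ, (ContinuousLinearMap.adjoint (V ℓ)).comp (((Z ℓ) i).comp (V ℓ))) =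
        ∑ ℓ, (ContinuousLinearMap.adjoint (V ℓ)).comp ((θ (nn ℓ) (Z ℓ)).comp (V ℓ))) :
    ∃ (α₀ : ℝ) (α : Fin g → ℝ), ∀ n, ∀ Y ∈ K n,
      θ n Y = (α₀ : ℂ) • (1 : EuclideanSpace ℂ (Fin n) →L[ℂ] EuclideanSpace ℂ (Fin n)) -
        ∑ i, (α i : ℂ) • Y i := by
  classical
  set toOp : (Fin g → ℝ) → (Fin g → Op 1) := fun y i => ((y i : ℂ)) • 1 with htoOp
  set S : Set (Fin g → ℝ) := {y | toOp y ∈ K 1} with hSdef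
  set φ : (Fin g → ℝ) → ℝ := fun y => (⟪e, θ 1 (toOp y) e⟫).re with hφdef
  have toOp0 : toOp 0 = (fun _ => (0 : Op 1)) := by
    funext i
    show (((0 : Fin g → ℝ) i : ℝ) : ℂ) • (1 : Op 1) = 0
    rw [show ((0 : Fin g → ℝ) i) = (0:ℝ) from rfl, Complex.ofReal_zero]
    exact zero_smul ℂ (1 : Op 1)
  have h0S : (0 : Fin g → ℝ) ∈ S := by
    show toOp 0 ∈ K 1
    rw [toOp0]; exact h0 1
  have hmemθ : ∀ y ∈ S, θ 1 (toOp y) = ((φ y : ℝ) : ℂ) • 1 := by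
    intro y hy
    have h2 : ((⟪e, θ 1 (toOp y) e⟫).re : ℂ) = ⟪e, θ 1 (toOp y) e⟫ :=
      real_inner_self (hθsa 1 (toOp y) hy) e
    calc θ 1 (toOp y) = ⟪e, θ 1 (toOp y) e⟫ • 1 := op1 _
      _ = _ := by rw [← h2]
  -- two-term affine combinations at level 1
  have hAS : ∀ y ∈ S, ∀ z ∈ S, ∀ t : ℝ, 0 ≤ t → t ≤ 1 →
      (t • y + (1 - t) • z ∈ S ∧
        φ (t • y + (1 - t) • z) = t * φ y + (1 - t) * φ z) := by
    intro y hy z hz t ht0 ht1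
    set c0 : ℝ := Real.sqrt t with hc0def
    set c1 : ℝ := Real.sqrt (1 - t) with hc1def
    have hc0 : (c0:ℂ)^2 = (t:ℂ) := by
      rw [← Complex.ofReal_pow]; norm_cast; exact Real.sq_sqrt ht0
    have hc1 : (c1:ℂ)^2 = ((1 - t : ℝ):ℂ) := by
      rw [← Complex.ofReal_pow]; norm_cast; exact Real.sq_sqrt (by linarith)
    have hZmem : ∀ ℓ : Fin 2, (![toOp y, toOp z] : Fin 2 → (Fin g → Op 1)) ℓ ∈ K 1 := by
      intro ℓ; fin_cases ℓ
      · exact hy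
      · exact hz
    have hsum : (∑ ℓ : Fin 2, (ContinuousLinearMap.adjoint
        ((![rk e ((c0:ℂ) • e), rk e ((c1:ℂ) • e)] : Fin 2 → (H 1 →L[ℂ] H 1)) ℓ)).comp
        ((![rk e ((c0:ℂ) • e), rk e ((c1:ℂ) • e)] : Fin 2 → (H 1 →L[ℂ] H 1)) ℓ)) = 1 := by
      rw [Fin.sum_univ_two]
      simp only [Matrix.cons_val_zero, Matrix.cons_val_one, Matrix.head_cons]
      rw [sand10, sand10, ← add_smul, hc0, hc1]
      rw [show (t:ℂ) + ((1 - t:ℝ):ℂ) = 1 by push_cast; ring, one_smul]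
    have hmem := hconv 1 2 (fun _ => 1) ![toOp y, toOp z]
      ![rk e ((c0:ℂ) • e), rk e ((c1:ℂ) • e)] hZmem hsum
    have hval := hθaff 1 2 (fun _ => 1) ![toOp y, toOp z]
      ![rk e ((c0:ℂ) • e), rk e ((c1:ℂ) • e)] hZmem hsum
    simp only [Fin.sum_univ_two, Matrix.cons_val_zero, Matrix.cons_val_one,
      Matrix.head_cons] at hmem hval
    have htuple : (fun i => (ContinuousLinearMap.adjoint (rk e ((c0:ℂ) • e))).comp
          ((toOp y i).comp (rk e ((c0:ℂ) • e)))
        + (ContinuousLinearMap.adjoint (rk e ((c1:ℂ) • e))).comp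
          ((toOp z i).comp (rk e ((c1:ℂ) • e))))
        = toOp (t • y + (1 - t) • z) := by
      funext i
      rw [sand1, sand1]
      have hy' : ⟪e, (toOp y i) e⟫ = (y i : ℂ) := by
        simp [htoOp, inner_smul_right, e]
      have hz' : ⟪e, (toOp z i) e⟫ = (z i : ℂ) := by
        simp [htoOp, inner_smul_right, e]
      rw [hy', hz', ← add_smul, hc0, hc1]
      show _ = (((t • y + (1 - t) • z) i : ℝ) : ℂ) • (1 : Op 1)
      congr 1
      have h5 : (t • y + (1 - t) • z) i = t * y i + (1 - t) * z i := by
        simp [Pi.add_apply, Pi.smul_apply, smul_eq_mul]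
      rw [h5]
      push_cast
      ring
    rw [htuple] at hmem hval
    refine ⟨hmem, ?_⟩
    rw [sand1, sand1, hmemθ y hy, hmemθ z hz] at hval
    have h1 : ⟪e, (((φ y : ℝ):ℂ) • (1 : Op 1)) e⟫ = ((φ y : ℝ):ℂ) := by
      simp [inner_smul_right, e]
    have h2 : ⟪e, (((φ z : ℝ):ℂ) • (1 : Op 1)) e⟫ = ((φ z : ℝ):ℂ) := by
      simp [inner_smul_right, e]
    rw [h1, h2, ← add_smul, hc0, hc1] at hval
    have hval2 : θ 1 (toOp (t • y + (1 - t) • z))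
        = ((t * φ y + (1 - t) * φ z : ℝ) : ℂ) • (1 : Op 1) := by
      rw [hval]
      congr 1
      push_cast
      ring
    have hcomb : θ 1 (toOp (t • y + (1 - t) • z))
        = ((φ (t • y + (1 - t) • z) : ℝ) : ℂ) • 1 := hmemθ _ hmem
    have := smul_one_inj (hcomb.symm.trans hval2)
    exact_mod_cast this
  -- extend ψ = φ - φ 0 to a linear functional
  obtain ⟨F, hF⟩ := PencilAux.extend_affine S (fun y => φ y - φ 0) h0S (by simp)
    (by
      intro y hy z hz t ht0 ht1
      obtain ⟨hmem, hval⟩ := hAS y hy z hz t ht0 ht1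
      refine ⟨hmem, ?_⟩
      show φ (t • y + (1 - t) • z) - φ 0 = t * (φ y - φ 0) + (1 - t) * (φ z - φ 0)
      rw [hval]; ring)
  refine ⟨φ 0, fun i => - F (Pi.single i 1), ?_⟩
  intro n Y hY
  -- compression to unit vectors
  have hyv : ∀ v : H n, ‖v‖ = 1 →
      ((fun i => (⟪v, Y i v⟫).re) ∈ S ∧
        ⟪v, θ n Y v⟫ = ((φ (fun i => (⟪v, Y i v⟫).re) : ℝ) : ℂ)) := by
    intro v hv
    have hreal : ∀ i, ((⟪v, Y i v⟫).re : ℂ) = ⟪v, Y i v⟫ := fun i =>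
      real_inner_self (hsa n Y hY i) v
    have hsum1 : (∑ _ℓ : Fin 1, (ContinuousLinearMap.adjoint (rk e v)).comp (rk e v)) = 1 := by
      rw [Fin.sum_univ_one]; exact sandv0 v hv
    have hmem := hconv 1 1 (fun _ => n) (fun _ => Y) (fun _ => rk e v) (fun _ => hY) hsum1
    have hval := hθaff 1 1 (fun _ => n) (fun _ => Y) (fun _ => rk e v) (fun _ => hY) hsum1
    simp only [Fin.sum_univ_one] at hmem hval
    have htup : (fun i => (ContinuousLinearMap.adjoint (rk e v)).comp
        ((Y i).comp (rk e v))) = toOp (fun i => (⟪v, Y i v⟫).re) := by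
      funext i
      rw [sandv v hv]
      show _ = ((⟪v, Y i v⟫).re : ℂ) • (1 : Op 1)
      rw [hreal i]
    rw [htup] at hmem hval
    refine ⟨hmem, ?_⟩
    rw [sandv v hv, hmemθ _ hmem] at hval
    exact (smul_one_inj hval).symm
  -- the difference operator
  set D : (EuclideanSpace ℂ (Fin n) →L[ℂ] EuclideanSpace ℂ (Fin n)) :=
    θ n Y - (((φ 0 : ℝ):ℂ) • 1 - ∑ i, ((- F (Pi.single i 1) : ℝ):ℂ) • Y i) with hDdef
  have hq : ∀ x : H n, ⟪(D : H n →ₗ[ℂ] H n) x, x⟫ = 0 := by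
    intro x
    rcases eq_or_ne x 0 with rfl | hx
    · simp
    · set c : ℂ := ((‖x‖ : ℝ) : ℂ) with hcdef
      have hc0 : c ≠ 0 := by
        simp [hcdef, Complex.ofReal_eq_zero, norm_eq_zero, hx]
      set v : H n := c⁻¹ • x with hvdef
      have hv : ‖v‖ = 1 := by
        rw [hvdef, norm_smul, norm_inv, hcdef, Complex.norm_real, Real.norm_eq_abs, abs_norm]
        exact inv_mul_cancel₀ (norm_ne_zero_iff.mpr hx)
      obtain ⟨hmem, hval⟩ := hyv v hv
      set yv : Fin g → ℝ := fun i => (⟪v, Y i v⟫).re with hyvdef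
      have hFyv : F yv = φ yv - φ 0 := hF yv hmem
      have hFsum : F yv = ∑ i, yv i * F (Pi.single i 1) := by
        have h := LinearMap.pi_apply_eq_sum_univ F yv
        have hs : ∀ i : Fin g, (fun j => if i = j then (1:ℝ) else 0) = Pi.single i 1 := by
          intro i; funext j
          simp [Pi.single_apply, eq_comm]
        rw [h]
        exact Finset.sum_congr rfl (fun i _ => by rw [hs i, smul_eq_mul])
      have hrealv : ∀ i, ((yv i : ℝ) : ℂ) = ⟪v, Y i v⟫ := fun i =>
        real_inner_self (hsa n Y hY i) v
      have hinner_vv : ⟪v, v⟫ = 1 := by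
        rw [inner_self_eq_norm_sq_to_K, hv]; norm_num
      have hDv : ⟪v, D v⟫ = 0 := by
        rw [hDdef]
        simp only [ContinuousLinearMap.sub_apply, ContinuousLinearMap.smul_apply,
          ContinuousLinearMap.one_apply, ContinuousLinearMap.sum_apply,
          inner_sub_right, inner_smul_right, inner_sum]
        rw [hval, hinner_vv]
        have hterm : ∀ i, ((- F (Pi.single i 1) : ℝ) : ℂ) * ⟪v, Y i v⟫
            = (((- F (Pi.single i 1)) * yv i : ℝ) : ℂ) := by
          intro i
          rw [← hrealv i]
          push_cast
          ring
        rw [Finset.sum_congr rfl (fun i _ => hterm i), ← Complex.ofReal_sum]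
        have : (φ yv : ℂ) - ((φ 0 : ℂ) * 1 - ((∑ i, (- F (Pi.single i 1)) * yv i : ℝ) : ℂ))
            = (((φ yv) - (φ 0 - ∑ i, (- F (Pi.single i 1)) * yv i) : ℝ) : ℂ) := by
          push_cast
          ring
        rw [this, Complex.ofReal_eq_zero]
        have hsumneg : (∑ i, (- F (Pi.single i 1)) * yv i) = - ∑ i, yv i * F (Pi.single i 1) := by
          rw [← Finset.sum_neg_distrib]
          exact Finset.sum_congr rfl (fun i _ => by ring)
        rw [hsumneg]
        linarith [hFyv, hFsum]
      have hxv : x = c • v := by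
        rw [hvdef, smul_smul, mul_inv_cancel₀ hc0, one_smul]
      have hxDx : ⟪x, D x⟫ = 0 := by
        rw [hxv]
        rw [map_smul, inner_smul_left, inner_smul_right, hDv]
        ring
      have : ⟪(D : H n →ₗ[ℂ] H n) x, x⟫ = (starRingEnd ℂ) ⟪x, D x⟫ := by
        rw [ContinuousLinearMap.coe_coe, ← inner_conj_symm]
      rw [this, hxDx, map_zero]
  have hD0 : (D : H n →ₗ[ℂ] H n) = 0 := (inner_map_self_eq_zero _).mp hq
  have hD0' : D = 0 := by
    apply ContinuousLinearMap.coe_injective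
    rw [hD0]
    rfl
  have := sub_eq_zero.mp hD0'
  exact this
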